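/- For integers f and ℓ with (f-1)/2 ≤ ℓ ≤ f-2, the number of numerical semigroups with Frobenius number f, multiplicity ℓ+1, and depth exactly 2 equals 2^{f-2-ℓ}. For ℓ outside this range, there are no such semigroups. -/

import Mathlib

/-- A numerical semigroup: a cofinite additive submonoid of ℕ containing 0. -/
def IsNumericalSemigroup (S : Set ℕ) : Prop :=
  0 ∈ S ∧ (∀ a ∈ S, ∀ b ∈ S, a + b ∈ S) ∧ Sᶜ.Finite

/-- The multiplicity: the least positive element. -/
noncomputable def sgMultiplicity (S : Set ℕ) : ℕ := sInf {n | n ∈ S ∧ 0 < n}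

/-- The Frobenius number: the largest integer not in `S`. -/
noncomputable def sgFrobenius (S : Set ℕ) : ℕ := sSup Sᶜ

/-- The depth `⌈(f+1)/m⌉`, computed as `(f + m) / m` in ℕ. -/
noncomputable def sgDepth (S : Set ℕ) : ℕ :=
  (sgFrobenius S + sgMultiplicity S) / sgMultiplicity S

private lemma sg_char {f ℓ : ℕ} {S : Set ℕ}
    (h : IsNumericalSemigroup S ∧ sgFrobenius S = f ∧ sgMultiplicity S = ℓ + 1 ∧ sgDepth S = 2) :
    f ≤ 2 * ℓ + 1 ∧ ℓ + 2 ≤ f ∧ 0 ∈ S ∧ ℓ + 1 ∈ S ∧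
      (∀ n, 0 < n → n < ℓ + 1 → n ∉ S) ∧ f ∉ S ∧ ∀ n, f < n → n ∈ S := by
  obtain ⟨⟨h0, hadd, hfin⟩, hF, hM, hD⟩ := h
  have hposne : {n | n ∈ S ∧ 0 < n}.Nonempty := by
    by_contra hne
    rw [Set.not_nonempty_iff_eq_empty] at hne
    rw [sgMultiplicity, hne, Nat.sInf_empty] at hM
    omega
  have hmem : (ℓ + 1) ∈ S := by
    have := Nat.sInf_mem hposne
    rw [show sInf {n | n ∈ S ∧ 0 < n} = ℓ + 1 from hM] at this
    exact this.1
  have hlow : ∀ n, 0 < n → n < ℓ + 1 → n ∉ S := by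
    intro n hn hlt hnS
    have := Nat.sInf_le (show n ∈ {n | n ∈ S ∧ 0 < n} from ⟨hnS, hn⟩)
    rw [sgMultiplicity] at hM; omega
  have hhigh : ∀ n, f < n → n ∈ S := by
    intro n hfn
    by_contra hnS
    have : n ≤ sSup Sᶜ := le_csSup hfin.bddAbove hnS
    rw [sgFrobenius] at hF; omega
  have hDf : (f + (ℓ + 1)) / (ℓ + 1) = 2 := by
    rw [sgDepth, hF, hM] at hD; exact hD
  have hd1 : 2 * (ℓ + 1) ≤ f + (ℓ + 1) := by
    calc 2 * (ℓ + 1) = (f + (ℓ + 1)) / (ℓ + 1) * (ℓ + 1) := by rw [hDf]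
    _ ≤ f + (ℓ + 1) := Nat.div_mul_le_self _ _
  have hd2 : f + (ℓ + 1) < 3 * (ℓ + 1) := by
    have := (Nat.div_lt_iff_lt_mul (show 0 < ℓ + 1 by omega)).mp
      (show (f + (ℓ + 1)) / (ℓ + 1) < 3 by omega)
    omega
  have hfS : f ∉ S := by
    have hne : Sᶜ.Nonempty := by
      by_contra hc
      rw [Set.not_nonempty_iff_eq_empty] at hc
      rw [sgFrobenius, hc, csSup_empty] at hF
      simp at hF; omega
    have := hne.csSup_mem hfin
    rw [sgFrobenius] at hF; rw [hF] at this
    exact this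
  have hfℓ : f ≠ ℓ + 1 := fun hc => hfS (hc ▸ hmem)
  exact ⟨by omega, by omega, h0, hmem, hlow, hfS, hhigh⟩

private lemma sg_construct {f ℓ : ℕ} (h1 : f ≤ 2 * ℓ + 1) (h2 : ℓ + 2 ≤ f) {T : Set ℕ}
    (hT : T ⊆ Set.Ioo (ℓ + 1) f) :
    IsNumericalSemigroup ({0, ℓ + 1} ∪ T ∪ Set.Ici (f + 1)) ∧
      sgFrobenius ({0, ℓ + 1} ∪ T ∪ Set.Ici (f + 1)) = f ∧
      sgMultiplicity ({0, ℓ + 1} ∪ T ∪ Set.Ici (f + 1)) = ℓ + 1 ∧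
      sgDepth ({0, ℓ + 1} ∪ T ∪ Set.Ici (f + 1)) = 2 := by
  set S : Set ℕ := {0, ℓ + 1} ∪ T ∪ Set.Ici (f + 1) with hS
  have hmem : ∀ n, n ∈ S ↔ n = 0 ∨ n = ℓ + 1 ∨ n ∈ T ∨ f + 1 ≤ n := by
    intro n
    simp only [hS, Set.mem_union, Set.mem_insert_iff, Set.mem_singleton_iff, Set.mem_Ici]
    tauto
  have hpos : ∀ n ∈ S, 0 < n → ℓ + 1 ≤ n := by
    intro n hn hp
    rcases (hmem n).mp hn with rfl | rfl | h | h
    · omega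
    · omega
    · exact le_of_lt (hT h).1
    · omega
  have h0S : 0 ∈ S := (hmem 0).mpr (Or.inl rfl)
  have hmS : ℓ + 1 ∈ S := (hmem _).mpr (Or.inr (Or.inl rfl))
  have hfS : f ∉ S := by
    intro hf
    rcases (hmem f).mp hf with hc | hc | hc | hc
    · omega
    · omega
    · exact absurd (hT hc).2 (lt_irrefl _)
    · omega
  have hhigh : ∀ n, f < n → n ∈ S := fun n hn => (hmem n).mpr (Or.inr (Or.inr (Or.inr hn)))
  have hns : IsNumericalSemigroup S := by
    refine ⟨h0S, ?_, ?_⟩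
    · intro a ha b hb
      rcases Nat.eq_zero_or_pos a with rfl | hap
      · simpa using hb
      rcases Nat.eq_zero_or_pos b with rfl | hbp
      · simpa using ha
      have := hpos a ha hap
      have := hpos b hb hbp
      exact hhigh _ (by omega)
    · refine Set.Finite.subset (Set.finite_Iio (f + 1)) ?_
      intro n hn
      simp only [Set.mem_compl_iff] at hn
      by_contra hc
      exact hn (hhigh n (by simpa [Set.mem_Iio] using hc))
  have hFrob : sgFrobenius S = f := by
    rw [sgFrobenius]
    have hbound : ∀ x ∈ Sᶜ, x ≤ f := by
      intro x hx
      by_contra hc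
      exact hx (hhigh x (by omega))
    exact le_antisymm (csSup_le ⟨f, hfS⟩ hbound) (le_csSup ⟨f, hbound⟩ hfS)
  have hMult : sgMultiplicity S = ℓ + 1 := by
    rw [sgMultiplicity]
    refine le_antisymm (Nat.sInf_le ⟨hmS, by omega⟩) ?_
    exact le_csInf ⟨ℓ + 1, hmS, by omega⟩ (fun b hb => hpos b hb.1 hb.2)
  refine ⟨hns, hFrob, hMult, ?_⟩
  rw [sgDepth, hFrob, hMult]
  exact Nat.div_eq_of_lt_le (by omega) (by omega)

theorem stmt7 (f ℓ : ℕ) :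
    (f ≤ 2 * ℓ + 1 → ℓ + 2 ≤ f →
      Nat.card {S : Set ℕ // IsNumericalSemigroup S ∧ sgFrobenius S = f ∧
        sgMultiplicity S = ℓ + 1 ∧ sgDepth S = 2} = 2 ^ (f - 2 - ℓ)) ∧
    (¬(f ≤ 2 * ℓ + 1 ∧ ℓ + 2 ≤ f) →
      Nat.card {S : Set ℕ // IsNumericalSemigroup S ∧ sgFrobenius S = f ∧
        sgMultiplicity S = ℓ + 1 ∧ sgDepth S = 2} = 0) := by
  constructor
  · intro h1 h2
    have e : {S : Set ℕ // IsNumericalSemigroup S ∧ sgFrobenius S = f ∧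
        sgMultiplicity S = ℓ + 1 ∧ sgDepth S = 2} ≃ ↥(𝒫 (Set.Ioo (ℓ + 1) f)) := by
      refine ⟨fun S => ⟨S.1 ∩ Set.Ioo (ℓ + 1) f, Set.inter_subset_right⟩,
        fun T => ⟨{0, ℓ + 1} ∪ T.1 ∪ Set.Ici (f + 1), sg_construct h1 h2 T.2⟩, ?_, ?_⟩
      · rintro ⟨S, hS⟩
        obtain ⟨-, -, h0, hm, hlow, hfS, hhigh⟩ := sg_char hS
        ext n
        simp only [Set.mem_union, Set.mem_insert_iff, Set.mem_singleton_iff, Set.mem_Ici,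
          Set.mem_inter_iff, Set.mem_Ioo]
        constructor
        · rintro (((rfl | rfl) | ⟨hn, -⟩) | hn)
          · exact h0
          · exact hm
          · exact hn
          · exact hhigh n (by omega)
        · intro hn
          rcases Nat.lt_or_ge n (ℓ + 1) with hc | hc
          · rcases Nat.eq_zero_or_pos n with rfl | hp
            · exact Or.inl (Or.inl (Or.inl rfl))
            · exact absurd hn (hlow n hp hc)
          · rcases eq_or_lt_of_le hc with hc' | hc'
            · exact Or.inl (Or.inl (Or.inr hc'.symm))
            · rcases Nat.lt_or_ge n f with hc2 | hc2
              · exact Or.inl (Or.inr ⟨hn, hc', hc2⟩)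
              · rcases eq_or_lt_of_le hc2 with hc2' | hc2'
                · exact absurd hn (hc2' ▸ hfS)
                · exact Or.inr (by omega)
      · rintro ⟨T, hT⟩
        simp only [Set.mem_powerset_iff] at hT
        ext n
        simp only [Set.mem_inter_iff, Set.mem_union, Set.mem_insert_iff,
          Set.mem_singleton_iff, Set.mem_Ici, Set.mem_Ioo]
        constructor
        · rintro ⟨(( rfl | rfl) | hn) | hn, hn2⟩
          · omega
          · omega
          · exact hn
          · omega
        · intro hn
          exact ⟨Or.inl (Or.inr hn), hT hn⟩
    rw [Nat.card_congr e, Nat.card_congr (Equiv.Set.powerset _),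
      Nat.card_eq_fintype_card, Fintype.card_set, Fintype.card_Ioo, Nat.card_Ioo]
    congr 1
    omega
  · intro h
    rw [Nat.card_eq_zero]
    left
    refine ⟨fun S => ?_⟩
    obtain ⟨h1, h2, -⟩ := sg_char S.2
    exact h ⟨h1, h2⟩
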